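/- Let G be a Garside group with positive monoid G⁺ and Garside element Δ, and let g ∈ G. Suppose gⁿ is conjugate to g⁻ⁿ for some integer n ≥ 1. If r is the greatest element of {t ∈ ℤ : Δ^t ≤_L h for some conjugate h of g} and s is the least element of {t ∈ ℤ : h ≤_L Δ^t for some conjugate h of g}, then r = −s (i.e. inf_s(g) = −sup_s(g)). -/

import Mathlib

/-- `a` left-divides `b` in the monoid `M`. -/
def dvdL {M : Type*} [Monoid M] (a b : M) : Prop := ∃ c, a * c = b

/-- `a` right-divides `b` in the monoid `M`. -/
def dvdR {M : Type*} [Monoid M] (a b : M) : Prop := ∃ c, c * a = b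

/-- `L(a)`, the set of left divisors of `a`. -/
def Lset {M : Type*} [Monoid M] (a : M) : Set M := {x | dvdL x a}

/-- `R(a)`, the set of right divisors of `a`. -/
def Rset {M : Type*} [Monoid M] (a : M) : Set M := {x | dvdR x a}

/-- `a` is an atom: `a ≠ 1` and `a = b * c` implies `b = 1` or `c = 1`. -/
def IsAtomElt {M : Type*} [Monoid M] (a : M) : Prop :=
  a ≠ 1 ∧ ∀ b c : M, a = b * c → b = 1 ∨ c = 1

/-- `M` is atomic: every element is a finite product of atoms, and the lengths of
expressions of a given element as products of atoms are bounded above. -/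
def Atomic (M : Type*) [Monoid M] : Prop :=
  (∀ a : M, ∃ l : List M, (∀ x ∈ l, IsAtomElt x) ∧ l.prod = a) ∧
  (∀ a : M, ∃ N : ℕ, ∀ l : List M, (∀ x ∈ l, IsAtomElt x) → l.prod = a → l.length ≤ N)

/-- `Δ` is a Garside element: `L(Δ) = R(Δ)` and `L(Δ)` generates `M`. -/
def IsGarsideElt {M : Type*} [Monoid M] (Δ : M) : Prop :=
  Lset Δ = Rset Δ ∧ Submonoid.closure (Lset Δ) = ⊤

/-- `d` is a greatest common lower bound of `a` and `b` with respect to `≤_L`. -/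
def IsGlbL {M : Type*} [Monoid M] (a b d : M) : Prop :=
  dvdL d a ∧ dvdL d b ∧ ∀ c : M, dvdL c a → dvdL c b → dvdL c d

/-- `d` is a least common upper bound of `a` and `b` with respect to `≤_L`. -/
def IsLubL {M : Type*} [Monoid M] (a b d : M) : Prop :=
  dvdL a d ∧ dvdL b d ∧ ∀ c : M, dvdL a c → dvdL b c → dvdL d c

/-- `d` is a greatest common lower bound of `a` and `b` with respect to `≤_R`. -/
def IsGlbR {M : Type*} [Monoid M] (a b d : M) : Prop :=
  dvdR d a ∧ dvdR d b ∧ ∀ c : M, dvdR c a → dvdR c b → dvdR c d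

/-- `d` is a least common upper bound of `a` and `b` with respect to `≤_R`. -/
def IsLubR {M : Type*} [Monoid M] (a b d : M) : Prop :=
  dvdR a d ∧ dvdR b d ∧ ∀ c : M, dvdR a c → dvdR b c → dvdR d c

/-- `M` is a Garside monoid: finitely generated, left and right cancellative, atomic,
`≤_L`- and `≤_R`-lattice conditions, and it possesses a Garside element. -/
def IsGarsideMonoid (M : Type*) [Monoid M] : Prop :=
  (∃ S : Set M, S.Finite ∧ Submonoid.closure S = ⊤) ∧
  (∀ a b c : M, a * b = a * c → b = c) ∧
  (∀ a b c : M, b * a = c * a → b = c) ∧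
  Atomic M ∧
  (∀ a b : M, ∃ d, IsGlbL a b d) ∧
  (∀ a b : M, ∃ d, IsLubL a b d) ∧
  (∀ a b : M, ∃ d, IsGlbR a b d) ∧
  (∀ a b : M, ∃ d, IsLubR a b d) ∧
  (∃ Δ : M, IsGarsideElt Δ)

/-- Group-level left divisibility: `a ≤_L b` iff `a⁻¹ * b` is positive. -/
def gdvdL {G : Type*} [Group G] (P : Submonoid G) (a b : G) : Prop := a⁻¹ * b ∈ P

/-- Group-level right divisibility: `a ≤_R b` iff `b * a⁻¹` is positive. -/
def gdvdR {G : Type*} [Group G] (P : Submonoid G) (a b : G) : Prop := b * a⁻¹ ∈ P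

/-- `G` is a Garside group with positive monoid `P` and chosen Garside element `Δ`:
`P` is a Garside monoid, every element of `G` is a fraction `a * b⁻¹` of positive
elements, and `Δ` is a Garside element of `P`. -/
def IsGarsideGroup {G : Type*} [Group G] (P : Submonoid G) (Δ : G) : Prop :=
  IsGarsideMonoid P ∧
  (∀ g : G, ∃ a b : P, g = (a : G) * (b : G)⁻¹) ∧
  ∃ hΔ : Δ ∈ P, IsGarsideElt (⟨Δ, hΔ⟩ : P)

section GarsideAux

variable {G : Type*} [Group G] {P : Submonoid G} {Δ : G}

private lemma lset_iff (hΔ : Δ ∈ P) (x : ↥P) :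
    x ∈ Lset (⟨Δ, hΔ⟩ : ↥P) ↔ (x : G)⁻¹ * Δ ∈ P := by
  constructor
  · rintro ⟨c, hc⟩
    have h1 : (x : G) * c = Δ := congrArg Subtype.val hc
    have h2 : (x : G)⁻¹ * Δ = c := by rw [← h1]; group
    rw [h2]; exact c.2
  · intro h
    exact ⟨⟨_, h⟩, Subtype.ext (by show (x:G) * ((x:G)⁻¹ * Δ) = Δ; group)⟩

private lemma rset_iff (hΔ : Δ ∈ P) (x : ↥P) :
    x ∈ Rset (⟨Δ, hΔ⟩ : ↥P) ↔ Δ * (x : G)⁻¹ ∈ P := by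
  constructor
  · rintro ⟨c, hc⟩
    have h1 : (c : G) * x = Δ := congrArg Subtype.val hc
    have h2 : Δ * (x : G)⁻¹ = c := by rw [← h1]; group
    rw [h2]; exact c.2
  · intro h
    exact ⟨⟨_, h⟩, Subtype.ext (by show (Δ * (x:G)⁻¹) * x = Δ; group)⟩

private lemma tau_one (hΔ : Δ ∈ P)
    (hLR : Lset (⟨Δ, hΔ⟩ : ↥P) = Rset (⟨Δ, hΔ⟩ : ↥P))
    (hcl : Submonoid.closure (Lset (⟨Δ, hΔ⟩ : ↥P)) = ⊤) :
    ∀ w ∈ P, Δ * w * Δ⁻¹ ∈ P ∧ Δ⁻¹ * w * Δ ∈ P := by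
  intro w hw
  have hmem : (⟨w, hw⟩ : ↥P) ∈ Submonoid.closure (Lset (⟨Δ, hΔ⟩ : ↥P)) := by
    rw [hcl]; trivial
  have key : ∀ z : ↥P, z ∈ Submonoid.closure (Lset (⟨Δ, hΔ⟩ : ↥P)) →
      Δ * (z : G) * Δ⁻¹ ∈ P ∧ Δ⁻¹ * (z : G) * Δ ∈ P := by
    intro z hz
    induction hz using Submonoid.closure_induction with
    | mem x hx =>
      have h1 : (x : G)⁻¹ * Δ ∈ P := (lset_iff hΔ x).1 hx
      have h2 : Δ * (x : G)⁻¹ ∈ P := (rset_iff hΔ x).1 (hLR ▸ hx)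
      constructor
      · have hd : ((⟨Δ * (x:G)⁻¹, h2⟩ : ↥P) : G)⁻¹ * Δ ∈ P := by
          have : ((Δ * (x:G)⁻¹)⁻¹ * Δ) = (x : G) := by group
          rw [this]; exact x.2
        have hdl : (⟨Δ * (x:G)⁻¹, h2⟩ : ↥P) ∈ Rset (⟨Δ, hΔ⟩ : ↥P) :=
          hLR ▸ ((lset_iff hΔ _).2 hd)
        have h3 : Δ * (Δ * (x:G)⁻¹)⁻¹ ∈ P := (rset_iff hΔ _).1 hdl
        have he : Δ * (x : G) * Δ⁻¹ = Δ * (Δ * (x:G)⁻¹)⁻¹ := by group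
        rw [he]; exact h3
      · have hc : Δ * ((⟨(x:G)⁻¹ * Δ, h1⟩ : ↥P) : G)⁻¹ ∈ P := by
          have : Δ * ((x:G)⁻¹ * Δ)⁻¹ = (x : G) := by group
          rw [this]; exact x.2
        have hcl' : (⟨(x:G)⁻¹ * Δ, h1⟩ : ↥P) ∈ Lset (⟨Δ, hΔ⟩ : ↥P) :=
          hLR ▸ ((rset_iff hΔ _).2 hc)
        have h3 : ((x:G)⁻¹ * Δ)⁻¹ * Δ ∈ P := (lset_iff hΔ _).1 hcl'
        have he : Δ⁻¹ * (x : G) * Δ = ((x:G)⁻¹ * Δ)⁻¹ * Δ := by group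
        rw [he]; exact h3
    | one =>
      constructor
      · have : Δ * ((1 : ↥P) : G) * Δ⁻¹ = 1 := by simp
        rw [this]; exact P.one_mem
      · have : Δ⁻¹ * ((1 : ↥P) : G) * Δ = 1 := by simp
        rw [this]; exact P.one_mem
    | mul a b _ _ iha ihb =>
      constructor
      · have : Δ * ((a * b : ↥P) : G) * Δ⁻¹
            = (Δ * (a:G) * Δ⁻¹) * (Δ * (b:G) * Δ⁻¹) := by
          push_cast; group
        rw [this]; exact P.mul_mem iha.1 ihb.1
      · have : Δ⁻¹ * ((a * b : ↥P) : G) * Δ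
            = (Δ⁻¹ * (a:G) * Δ) * (Δ⁻¹ * (b:G) * Δ) := by
          push_cast; group
        rw [this]; exact P.mul_mem iha.2 ihb.2
  exact key ⟨w, hw⟩ hmem

private lemma tau_z (hΔ : Δ ∈ P)
    (hLR : Lset (⟨Δ, hΔ⟩ : ↥P) = Rset (⟨Δ, hΔ⟩ : ↥P))
    (hcl : Submonoid.closure (Lset (⟨Δ, hΔ⟩ : ↥P)) = ⊤) :
    ∀ t : ℤ, ∀ w ∈ P, Δ ^ t * w * Δ ^ (-t) ∈ P := by
  intro t
  induction t using Int.induction_on with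
  | zero => intro w hw; simpa using hw
  | succ k ih =>
    intro w hw
    have h1 := (tau_one hΔ hLR hcl _ (ih w hw)).1
    have he : Δ ^ ((k:ℤ)+1) * w * Δ ^ (-((k:ℤ)+1))
        = Δ * (Δ ^ (k:ℤ) * w * Δ ^ (-(k:ℤ))) * Δ⁻¹ := by group
    rw [he]; exact h1
  | pred k ih =>
    intro w hw
    have h1 := (tau_one hΔ hLR hcl _ (ih w hw)).2
    have he : Δ ^ (-(k:ℤ)-1) * w * Δ ^ (-(-(k:ℤ)-1))
        = Δ⁻¹ * (Δ ^ (-(k:ℤ)) * w * Δ ^ (-(-(k:ℤ)))) * Δ := by group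
    rw [he]; exact h1

private lemma bound_P (hΔ : Δ ∈ P)
    (hcl : Submonoid.closure (Lset (⟨Δ, hΔ⟩ : ↥P)) = ⊤)
    (hτ : ∀ t : ℤ, ∀ w ∈ P, Δ ^ t * w * Δ ^ (-t) ∈ P) :
    ∀ w ∈ P, ∃ N : ℕ, w⁻¹ * Δ ^ (N:ℤ) ∈ P := by
  intro w hw
  have hmem : (⟨w, hw⟩ : ↥P) ∈ Submonoid.closure (Lset (⟨Δ, hΔ⟩ : ↥P)) := by
    rw [hcl]; trivial
  have key : ∀ z : ↥P, z ∈ Submonoid.closure (Lset (⟨Δ, hΔ⟩ : ↥P)) →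
      ∃ N : ℕ, (z : G)⁻¹ * Δ ^ (N:ℤ) ∈ P := by
    intro z hz
    induction hz using Submonoid.closure_induction with
    | mem x hx =>
      obtain ⟨c, hc⟩ := hx
      have h1 : (x : G) * c = Δ := congrArg Subtype.val hc
      refine ⟨1, ?_⟩
      have : (x : G)⁻¹ * Δ ^ ((1:ℕ):ℤ) = c := by rw [← h1]; push_cast; group
      rw [this]; exact c.2
    | one =>
      refine ⟨0, ?_⟩
      have : ((1 : ↥P) : G)⁻¹ * Δ ^ ((0:ℕ):ℤ) = 1 := by push_cast; group
      rw [this]; exact P.one_mem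
    | mul a b _ _ iha ihb =>
      obtain ⟨N₁, h1⟩ := iha
      obtain ⟨N₂, h2⟩ := ihb
      refine ⟨N₁ + N₂, ?_⟩
      have he : ((a * b : ↥P) : G)⁻¹ * Δ ^ ((N₁ + N₂ : ℕ):ℤ)
          = ((b:G)⁻¹ * Δ ^ (N₂:ℤ)) *
            (Δ ^ (-(N₂:ℤ)) * ((a:G)⁻¹ * Δ ^ (N₁:ℤ)) * Δ ^ (-(-(N₂:ℤ)))) := by
        push_cast; group
      rw [he]; exact P.mul_mem h2 (hτ (-(N₂:ℤ)) _ h1)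
  exact key ⟨w, hw⟩ hmem

private lemma bound_G (hΔ : Δ ∈ P)
    (hfrac : ∀ g : G, ∃ a b : P, g = (a : G) * (b : G)⁻¹)
    (hcl : Submonoid.closure (Lset (⟨Δ, hΔ⟩ : ↥P)) = ⊤)
    (hτ : ∀ t : ℤ, ∀ w ∈ P, Δ ^ t * w * Δ ^ (-t) ∈ P) :
    ∀ g : G, ∃ N : ℕ, g * Δ ^ (N:ℤ) ∈ P := by
  intro g
  obtain ⟨a, b, hab⟩ := hfrac g
  obtain ⟨N, hN⟩ := bound_P hΔ hcl hτ (b : G) b.2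
  refine ⟨N, ?_⟩
  have : g * Δ ^ (N:ℤ) = (a : G) * ((b:G)⁻¹ * Δ ^ (N:ℤ)) := by rw [hab]; group
  rw [this]; exact P.mul_mem a.2 hN

private lemma dvdR_iff (x y : ↥P) : dvdR x y ↔ (y : G) * (x : G)⁻¹ ∈ P := by
  constructor
  · rintro ⟨c, hc⟩
    have h1 : (c : G) * x = y := congrArg Subtype.val hc
    have h2 : (y : G) * (x : G)⁻¹ = c := by rw [← h1]; group
    rw [h2]; exact c.2
  · intro h
    exact ⟨⟨_, h⟩, Subtype.ext (by show ((y:G) * (x:G)⁻¹) * x = y; group)⟩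

private def IsPGlb (P : Submonoid G) (a b d : G) : Prop :=
  d ∈ P ∧ a * d⁻¹ ∈ P ∧ b * d⁻¹ ∈ P ∧
    ∀ c ∈ P, a * c⁻¹ ∈ P → b * c⁻¹ ∈ P → d * c⁻¹ ∈ P

private lemma glbP_exists (hglb : ∀ a b : ↥P, ∃ d, IsGlbR a b d) :
    ∀ a b : G, a ∈ P → b ∈ P → ∃ d, IsPGlb P a b d := by
  intro a b ha hb
  obtain ⟨d, hd1, hd2, hd3⟩ := hglb ⟨a, ha⟩ ⟨b, hb⟩
  refine ⟨(d : G), d.2, (dvdR_iff _ _).1 hd1, (dvdR_iff _ _).1 hd2, ?_⟩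
  intro c hc h1 h2
  exact (dvdR_iff ⟨c, hc⟩ d).1 (hd3 ⟨c, hc⟩ ((dvdR_iff _ _).2 h1) ((dvdR_iff _ _).2 h2))

private lemma glb_shift (hΔ : Δ ∈ P) (hglb : ∀ a b : ↥P, ∃ d, IsGlbR a b d)
    {a b d : G} (ha : a ∈ P) (hb : b ∈ P) (hd : IsPGlb P a b d) :
    IsPGlb P (a * Δ) (b * Δ) (d * Δ) := by
  obtain ⟨hdP, hda, hdb, hduniv⟩ := hd
  refine ⟨P.mul_mem hdP hΔ, ?_, ?_, ?_⟩
  · have : (a * Δ) * (d * Δ)⁻¹ = a * d⁻¹ := by group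
    rw [this]; exact hda
  · have : (b * Δ) * (d * Δ)⁻¹ = b * d⁻¹ := by group
    rw [this]; exact hdb
  · intro c hc h1 h2
    obtain ⟨D, hDP, hDa, hDb, hDuniv⟩ :=
      glbP_exists hglb (a * Δ) (b * Δ) (P.mul_mem ha hΔ) (P.mul_mem hb hΔ)
    have hDc : D * c⁻¹ ∈ P := hDuniv c hc h1 h2
    have he : D * Δ⁻¹ ∈ P := by
      refine hDuniv Δ hΔ ?_ ?_
      · have : (a * Δ) * Δ⁻¹ = a := by group
        rw [this]; exact ha
      · have : (b * Δ) * Δ⁻¹ = b := by group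
        rw [this]; exact hb
    have hea : a * (D * Δ⁻¹)⁻¹ ∈ P := by
      have : a * (D * Δ⁻¹)⁻¹ = (a * Δ) * D⁻¹ := by group
      rw [this]; exact hDa
    have heb : b * (D * Δ⁻¹)⁻¹ ∈ P := by
      have : b * (D * Δ⁻¹)⁻¹ = (b * Δ) * D⁻¹ := by group
      rw [this]; exact hDb
    have hde : d * (D * Δ⁻¹)⁻¹ ∈ P := hduniv _ he hea heb
    have hfin : (d * Δ) * c⁻¹ = (d * (D * Δ⁻¹)⁻¹) * (D * c⁻¹) := by group
    rw [hfin]; exact P.mul_mem hde hDc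

private lemma glb_shift_iter (hΔ : Δ ∈ P) (hglb : ∀ a b : ↥P, ∃ d, IsGlbR a b d)
    {a b d : G} (ha : a ∈ P) (hb : b ∈ P) (hd : IsPGlb P a b d) :
    ∀ K : ℕ, IsPGlb P (a * Δ ^ (K:ℤ)) (b * Δ ^ (K:ℤ)) (d * Δ ^ (K:ℤ)) := by
  intro K
  induction K with
  | zero => simpa using hd
  | succ K ih =>
    have hΔK : Δ ^ (K:ℤ) ∈ P := by
      rw [zpow_natCast]; exact pow_mem hΔ K
    have := glb_shift hΔ hglb (P.mul_mem ha hΔK) (P.mul_mem hb hΔK) ih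
    have ea : a * Δ ^ ((K+1:ℕ):ℤ) = (a * Δ ^ (K:ℤ)) * Δ := by push_cast; group
    have eb : b * Δ ^ ((K+1:ℕ):ℤ) = (b * Δ ^ (K:ℤ)) * Δ := by push_cast; group
    have ed : d * Δ ^ ((K+1:ℕ):ℤ) = (d * Δ ^ (K:ℤ)) * Δ := by push_cast; group
    rw [ea, eb, ed]; exact this

private lemma glbG (hΔ : Δ ∈ P)
    (hbG : ∀ g : G, ∃ N : ℕ, g * Δ ^ (N:ℤ) ∈ P)
    (hglb : ∀ a b : ↥P, ∃ d, IsGlbR a b d) :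
    ∀ a b : G, ∃ d : G,
    a * d⁻¹ ∈ P ∧ b * d⁻¹ ∈ P ∧
    ∀ w : G, a * w⁻¹ ∈ P → b * w⁻¹ ∈ P → d * w⁻¹ ∈ P := by
  intro a b
  obtain ⟨N₁, h1⟩ := hbG a
  obtain ⟨N₂, h2⟩ := hbG b
  set N : ℕ := N₁ + N₂ with hN
  have hΔmem : ∀ K : ℕ, Δ ^ (K:ℤ) ∈ P := fun K => by
    rw [zpow_natCast]; exact pow_mem hΔ K
  have ha' : a * Δ ^ (N:ℤ) ∈ P := by
    have : a * Δ ^ (N:ℤ) = (a * Δ ^ (N₁:ℤ)) * Δ ^ (N₂:ℤ) := by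
      rw [hN]; push_cast; group
    rw [this]; exact P.mul_mem h1 (hΔmem N₂)
  have hb' : b * Δ ^ (N:ℤ) ∈ P := by
    have : b * Δ ^ (N:ℤ) = (b * Δ ^ (N₂:ℤ)) * Δ ^ (N₁:ℤ) := by
      rw [hN]; push_cast; group
    rw [this]; exact P.mul_mem h2 (hΔmem N₁)
  obtain ⟨d₀, hd₀⟩ := glbP_exists hglb _ _ ha' hb'
  refine ⟨d₀ * Δ ^ (-(N:ℤ)), ?_, ?_, ?_⟩
  · have : a * (d₀ * Δ ^ (-(N:ℤ)))⁻¹ = (a * Δ ^ (N:ℤ)) * d₀⁻¹ := by group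
    rw [this]; exact hd₀.2.1
  · have : b * (d₀ * Δ ^ (-(N:ℤ)))⁻¹ = (b * Δ ^ (N:ℤ)) * d₀⁻¹ := by group
    rw [this]; exact hd₀.2.2.1
  · intro w hw1 hw2
    obtain ⟨K, hK⟩ := hbG w
    have htriple := glb_shift_iter hΔ hglb ha' hb' hd₀ K
    have hcP : w * Δ ^ ((N+K:ℕ):ℤ) ∈ P := by
      have : w * Δ ^ ((N+K:ℕ):ℤ) = (w * Δ ^ (K:ℤ)) * Δ ^ (N:ℤ) := by push_cast; group
      rw [this]; exact P.mul_mem hK (hΔmem N)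
    have hc1 : (a * Δ ^ (N:ℤ) * Δ ^ (K:ℤ)) * (w * Δ ^ ((N+K:ℕ):ℤ))⁻¹ ∈ P := by
      have : (a * Δ ^ (N:ℤ) * Δ ^ (K:ℤ)) * (w * Δ ^ ((N+K:ℕ):ℤ))⁻¹ = a * w⁻¹ := by
        push_cast; group
      rw [this]; exact hw1
    have hc2 : (b * Δ ^ (N:ℤ) * Δ ^ (K:ℤ)) * (w * Δ ^ ((N+K:ℕ):ℤ))⁻¹ ∈ P := by
      have : (b * Δ ^ (N:ℤ) * Δ ^ (K:ℤ)) * (w * Δ ^ ((N+K:ℕ):ℤ))⁻¹ = b * w⁻¹ := by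
        push_cast; group
      rw [this]; exact hw2
    have hfin0 := htriple.2.2.2 _ hcP hc1 hc2
    have hfin : (d₀ * Δ ^ (-(N:ℤ))) * w⁻¹
        = (d₀ * Δ ^ (K:ℤ)) * (w * Δ ^ ((N+K:ℕ):ℤ))⁻¹ := by push_cast; group
    rw [hfin]; exact hfin0

private lemma glb_fin (hΔ : Δ ∈ P)
    (hbG : ∀ g : G, ∃ N : ℕ, g * Δ ^ (N:ℤ) ∈ P)
    (hglb : ∀ a b : ↥P, ∃ d, IsGlbR a b d)
    (f : ℕ → G) (k : ℕ) : ∃ d : G,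
    (∀ i ≤ k, f i * d⁻¹ ∈ P) ∧
    (∀ w : G, (∀ i ≤ k, f i * w⁻¹ ∈ P) → d * w⁻¹ ∈ P) := by
  induction k with
  | zero =>
    refine ⟨f 0, ?_, ?_⟩
    · intro i hi
      interval_cases i
      have : f 0 * (f 0)⁻¹ = 1 := by group
      rw [this]; exact P.one_mem
    · intro w hw; exact hw 0 le_rfl
  | succ k ih =>
    obtain ⟨d₁, hd₁, hu₁⟩ := ih
    obtain ⟨d, hda, hdb, hdu⟩ := glbG hΔ hbG hglb (f (k+1)) d₁
    refine ⟨d, ?_, ?_⟩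
    · intro i hi
      rcases Nat.lt_or_ge i (k+1) with h | h
      · have : f i * d⁻¹ = (f i * d₁⁻¹) * (d₁ * d⁻¹) := by group
        rw [this]; exact P.mul_mem (hd₁ i (Nat.lt_succ_iff.mp h)) hdb
      · have : i = k + 1 := le_antisymm hi h
        rw [this]; exact hda
    · intro w hw
      exact hdu w (hw (k+1) le_rfl) (hu₁ w fun i hi => hw i (Nat.le_succ_of_le hi))

private lemma powmul
    (hτ : ∀ t : ℤ, ∀ w ∈ P, Δ ^ t * w * Δ ^ (-t) ∈ P)
    (h : G) (u : ℤ) (hh : Δ ^ (-u) * h ∈ P) :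
    ∀ k : ℕ, Δ ^ (-((k:ℤ) * u)) * h ^ k ∈ P := by
  intro k
  induction k with
  | zero => simpa using P.one_mem
  | succ k ih =>
    have he : Δ ^ (-(((k+1:ℕ):ℤ) * u)) * h ^ (k+1)
        = (Δ ^ (-((k:ℤ)*u)) * (Δ ^ (-u) * h) * Δ ^ (-(-((k:ℤ)*u))))
          * (Δ ^ (-((k:ℤ)*u)) * h ^ k) := by
      push_cast
      rw [pow_succ']
      group
    rw [he]
    exact P.mul_mem (hτ (-((k:ℤ)*u)) _ hh) ih

private lemma key_lemma
    (hτ : ∀ t : ℤ, ∀ w ∈ P, Δ ^ t * w * Δ ^ (-t) ∈ P)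
    (hglbfin : ∀ (f : ℕ → G) (k : ℕ), ∃ d : G,
      (∀ i ≤ k, f i * d⁻¹ ∈ P) ∧
      (∀ w : G, (∀ i ≤ k, f i * w⁻¹ ∈ P) → d * w⁻¹ ∈ P))
    (x : G) (u : ℤ) (m : ℕ) (hm : 1 ≤ m)
    (hx : Δ ^ (-((m:ℤ) * u)) * x ^ m ∈ P) :
    ∃ c : G, Δ ^ (-u) * (c * x * c⁻¹) ∈ P := by
  set y : ℕ → G := fun i => Δ ^ (-((i:ℤ) * u)) * x ^ i with hy
  obtain ⟨C, hCl, hCu⟩ := hglbfin y (m - 1)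
  have hy0 : y 0 = 1 := by simp [hy]
  have hstep : ∀ i : ℕ, y (i+1) = Δ ^ (-u) * y i * x := by
    intro i
    have e1 : (-(((i+1:ℕ):ℤ) * u)) = (-u) + (-((i:ℤ) * u)) := by push_cast; ring
    rw [hy]
    simp only []
    rw [e1, zpow_add, pow_succ]
    group
  have hym : y m * C⁻¹ ∈ P := by
    have h1 : y 0 * C⁻¹ ∈ P := hCl 0 (Nat.zero_le _)
    have : y m * C⁻¹ = y m * (y 0 * C⁻¹) := by rw [hy0]; group
    rw [this]; exact P.mul_mem hx h1
  have hlb : ∀ i : ℕ, 1 ≤ i → i ≤ m → y i * C⁻¹ ∈ P := by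
    intro i h1 h2
    rcases Nat.lt_or_ge i m with h | h
    · exact hCl i (by omega)
    · have : i = m := le_antisymm h2 h
      rw [this]; exact hym
  have hlb' : ∀ i ≤ m - 1, y i * (Δ ^ u * C * x⁻¹)⁻¹ ∈ P := by
    intro i hi
    have h1 : y (i+1) * C⁻¹ ∈ P := hlb (i+1) (by omega) (by omega)
    have he : y i * (Δ ^ u * C * x⁻¹)⁻¹
        = Δ ^ u * (y (i+1) * C⁻¹) * Δ ^ (-u) := by
      rw [hstep i]; group
    rw [he]; exact hτ u _ h1
  have hCC' : C * (Δ ^ u * C * x⁻¹)⁻¹ ∈ P := hCu _ hlb'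
  refine ⟨C, ?_⟩
  have he : Δ ^ (-u) * (C * x * C⁻¹)
      = Δ ^ (-u) * (C * (Δ ^ u * C * x⁻¹)⁻¹) * Δ ^ (-(-u)) := by group
  rw [he]
  exact hτ (-u) _ hCC'

end GarsideAux

/-- **Corollary 6.3.** If `gⁿ` is conjugate to `g⁻ⁿ` for some `n ≥ 1`, then
`inf_s(g) = -sup_s(g)`. -/
theorem infs_eq_neg_sups_of_conj_inv_pow {G : Type*} [Group G]
    (P : Submonoid G) (Δ : G) (hG : IsGarsideGroup P Δ) (g : G)
    (hconj : ∃ n : ℕ, 1 ≤ n ∧ IsConj (g ^ n) (g⁻¹ ^ n)) (r s : ℤ)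
    (hr : IsGreatest {t : ℤ | ∃ h : G, IsConj g h ∧ gdvdL P (Δ ^ t) h} r)
    (hs : IsLeast {t : ℤ | ∃ h : G, IsConj g h ∧ gdvdL P h (Δ ^ t)} s) :
    r = -s := by
  obtain ⟨hmon, hfrac, hΔ, hLR, hcl⟩ := hG
  have hglb : ∀ a b : ↥P, ∃ d, IsGlbR a b d := hmon.2.2.2.2.2.2.1
  have hτ : ∀ t : ℤ, ∀ w ∈ P, Δ ^ t * w * Δ ^ (-t) ∈ P := tau_z hΔ hLR hcl
  have hbG : ∀ g : G, ∃ N : ℕ, g * Δ ^ (N:ℤ) ∈ P := bound_G hΔ hfrac hcl hτ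
  have hglbfin := glb_fin hΔ hbG hglb
  obtain ⟨n, hn, hcj⟩ := hconj
  obtain ⟨v, hv⟩ := isConj_iff.1 hcj
  -- hv : v * g ^ n * v⁻¹ = g⁻¹ ^ n
  -- Step A: -s ∈ A, hence -s ≤ r
  have hstepA : -s ≤ r := by
    obtain ⟨h', hgh', hdvd'⟩ := hs.1
    obtain ⟨w, hw⟩ := isConj_iff.1 hgh'
    -- hdvd' : h'⁻¹ * Δ ^ s ∈ P
    have h0 : Δ ^ (-(-s)) * h'⁻¹ ∈ P := by
      have he : Δ ^ (-(-s)) * h'⁻¹ = Δ ^ s * (h'⁻¹ * Δ ^ s) * Δ ^ (-s) := by group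
      rw [he]; exact hτ s _ hdvd'
    have h1 := powmul hτ h'⁻¹ (-s) h0 n
    set x : G := (w * v) * g * (w * v)⁻¹ with hx
    have hxn : h'⁻¹ ^ n = x ^ n := by
      have e1 : h'⁻¹ = w * g⁻¹ * w⁻¹ := by rw [← hw]; group
      rw [e1, conj_pow, ← hv, hx, conj_pow]
      group
    have h2 : Δ ^ (-((n:ℤ) * (-s))) * x ^ n ∈ P := by rw [← hxn]; exact h1
    obtain ⟨c, hc⟩ := key_lemma hτ hglbfin x (-s) n hn h2
    have hmemA : -s ∈ {t : ℤ | ∃ h : G, IsConj g h ∧ gdvdL P (Δ ^ t) h} := by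
      refine ⟨c * x * c⁻¹, ?_, ?_⟩
      · exact isConj_iff.2 ⟨c * (w * v), by rw [hx]; group⟩
      · show (Δ ^ (-s))⁻¹ * (c * x * c⁻¹) ∈ P
        have he : (Δ ^ (-s))⁻¹ * (c * x * c⁻¹) = Δ ^ (-(-s)) * (c * x * c⁻¹) := by
          group
        rw [he]; exact hc
    exact hr.2 hmemA
  -- Step B: -r ∈ B, hence s ≤ -r
  have hstepB : s ≤ -r := by
    obtain ⟨h, hgh, hdvd⟩ := hr.1
    obtain ⟨w, hw⟩ := isConj_iff.1 hgh
    -- hdvd : (Δ ^ r)⁻¹ * h ∈ P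
    have h0 : Δ ^ (-r) * h ∈ P := by
      have he : Δ ^ (-r) * h = (Δ ^ r)⁻¹ * h := by group
      rw [he]; exact hdvd
    have h1 := powmul hτ h r h0 n
    set x : G := (w * v⁻¹) * g⁻¹ * (w * v⁻¹)⁻¹ with hx
    have hxn : h ^ n = x ^ n := by
      have e1 : h = w * g * w⁻¹ := hw.symm
      have e2 : g ^ n = v⁻¹ * g⁻¹ ^ n * v := by rw [← hv]; group
      rw [e1, conj_pow, e2, hx, conj_pow]
      group
    have h2 : Δ ^ (-((n:ℤ) * r)) * x ^ n ∈ P := by rw [← hxn]; exact h1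
    obtain ⟨c, hc⟩ := key_lemma hτ hglbfin x r n hn h2
    have hmemB : -r ∈ {t : ℤ | ∃ h : G, IsConj g h ∧ gdvdL P h (Δ ^ t)} := by
      refine ⟨(c * x * c⁻¹)⁻¹, ?_, ?_⟩
      · refine isConj_iff.2 ⟨c * (w * v⁻¹), ?_⟩
        rw [hx]; group
      · show ((c * x * c⁻¹)⁻¹)⁻¹ * Δ ^ (-r) ∈ P
        have he : ((c * x * c⁻¹)⁻¹)⁻¹ * Δ ^ (-r)
            = Δ ^ r * (Δ ^ (-r) * (c * x * c⁻¹)) * Δ ^ (-r) := by group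
        rw [he]; exact hτ r _ hc
    exact hs.2 hmemB
  omega
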